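/- For all integers a, b ≥ 1 and q ≥ 0, the forest consisting of q+1 pairwise disjoint stars with a vertices each together with q pairwise disjoint stars with b vertices each admits a super edge-magic labeling. -/

import Mathlib

/-- An edge-magic labeling of an `n`-vertex graph `G` with `m` edges and magic constant `k`:
a bijection `f : V ∪ E → {1,…,n+m}` with `f(u)+f(v)+f(uv) = k` for every edge `uv`. -/
def IsEdgeMagicLabeling {V : Type*} [Fintype V] (G : SimpleGraph V)
    (f : V ⊕ ↥G.edgeSet → ℕ) (k : ℕ) : Prop :=
  Set.BijOn f Set.univ (Set.Icc 1 (Fintype.card V + G.edgeSet.ncard)) ∧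
  ∀ (u v : V) (h : G.Adj u v),
    f (Sum.inl u) + f (Sum.inl v) + f (Sum.inr ⟨s(u, v), (G.mem_edgeSet).mpr h⟩) = k

/-- A super edge-magic labeling: an edge-magic labeling whose vertex labels are
exactly `{1,…,n}`. -/
def IsSuperEdgeMagicLabeling {V : Type*} [Fintype V] (G : SimpleGraph V)
    (f : V ⊕ ↥G.edgeSet → ℕ) : Prop :=
  (∃ k, IsEdgeMagicLabeling G f k) ∧
  Set.range (fun v : V => f (Sum.inl v)) = Set.Icc 1 (Fintype.card V)

/-- A graph is super edge-magic if it admits a super edge-magic labeling. -/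
def SuperEdgeMagic {V : Type*} [Fintype V] (G : SimpleGraph V) : Prop :=
  ∃ f, IsSuperEdgeMagicLabeling G f

/-- The constellation consisting of `p` pairwise disjoint stars, the `i`-th having `m i`
edges: vertex `⟨i, 0⟩` is the center of the `i`-th star and `⟨i, 1⟩, …, ⟨i, m i⟩` are its
leaves. -/
def constellationGraph (p : ℕ) (m : Fin p → ℕ) :
    SimpleGraph (Σ i : Fin p, Fin (m i + 1)) where
  Adj a b := a.1 = b.1 ∧ ((a.2.val = 0 ∧ b.2.val ≠ 0) ∨ (a.2.val ≠ 0 ∧ b.2.val = 0))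
  symm := by constructor; rintro ⟨i, x⟩ ⟨j, y⟩ ⟨h1, h2⟩; exact ⟨h1.symm, by tauto⟩
  loopless := by constructor; rintro ⟨i, x⟩ ⟨-, h⟩; tauto


private lemma aux_dm {d u r u' r' : ℕ} (hr : r < d) (hr' : r' < d)
    (h : d * u + r = d * u' + r') : u = u' ∧ r = r' := by
  have hrr : r = r' := by
    have h2 := congrArg (· % d) h
    simpa [Nat.mul_add_mod, Nat.mod_eq_of_lt hr, Nat.mod_eq_of_lt hr'] using h2
  refine ⟨?_, hrr⟩
  have h3 : d * u = d * u' := by omega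
  exact Nat.eq_of_mul_eq_mul_left (by omega) h3

private abbrev Vtx (a b q : ℕ) :=
  Σ i : Fin (2 * q + 1), Fin ((fun i : Fin (2 * q + 1) => if i.val ≤ q then a - 1 else b - 1) i + 1)

/-- Vertex labeling. -/
private def gV (a b q : ℕ) (v : Vtx a b q) : ℕ :=
  if v.2.val = 0 then (if v.1.val ≤ q then 2 * v.1.val + 1 else 2 * (v.1.val - q))
  else if v.1.val ≤ q then 2*q+2 + q*(b-1) + (q+1)*(v.2.val-1) + (q - v.1.val)
  else 2*q+2 + q*(v.2.val-1) + (2*q - v.1.val)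

/-- Edge sum value of the edge joining center `iv` to its `jv`-th leaf. -/
private def sumVal (b q iv jv : ℕ) : ℕ :=
  if iv ≤ q then 3*q+3 + q*(b-1) + (q+1)*(jv-1) + iv else 2*q+2 + iv + q*(jv-1)

private lemma fin_facts {a b q : ℕ} {i : Fin (2 * q + 1)}
    (j : Fin ((fun i : Fin (2 * q + 1) => if i.val ≤ q then a - 1 else b - 1) i + 1)) :
    (i.val ≤ q → j.val ≤ a - 1) ∧ (q + 1 ≤ i.val → j.val ≤ b - 1) := by
  have h3 : j.val < (if i.val ≤ q then a - 1 else b - 1) + 1 := j.isLt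
  by_cases hq : i.val ≤ q
  · rw [if_pos hq] at h3; exact ⟨fun _ => by omega, fun h => by omega⟩
  · rw [if_neg hq] at h3; exact ⟨fun h => by omega, fun _ => by omega⟩

private lemma gV_inj (a b q : ℕ) : Function.Injective (gV a b q) := by
  rintro ⟨i, j⟩ ⟨i', j'⟩ h
  have hil := i.isLt; have hil' := i'.isLt
  obtain ⟨hja, hjb⟩ := fin_facts (a := a) (b := b) j
  obtain ⟨hja', hjb'⟩ := fin_facts (a := a) (b := b) j'
  by_cases h0 : j.val = 0 <;> by_cases h0' : j'.val = 0 <;>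
    by_cases hi : i.val ≤ q <;> by_cases hi' : i'.val ≤ q <;>
    simp only [gV, h0, h0', hi, hi', if_true, if_false, ite_true, ite_false,
      eq_self_iff_true, not_true, not_false_iff] at h <;>
    try (exfalso; omega)
  -- remaining: center/center (same parity class) and leaf/leaf
  · -- centers, both i,i' ≤ q
    have hii : i = i' := Fin.ext (by omega)
    subst hii
    have hjj : j = j' := Fin.ext (by omega)
    rw [hjj]
  · -- centers, both > q
    have hii : i = i' := Fin.ext (by omega)
    subst hii
    have hjj : j = j' := Fin.ext (by omega)
    rw [hjj]
  · -- a-leaf vs a-leaf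
    have hd := aux_dm (d := q+1) (u := j.val - 1) (r := q - i.val)
      (u' := j'.val - 1) (r' := q - i'.val) (by omega) (by omega) (by omega)
    have hii : i = i' := Fin.ext (by omega)
    subst hii
    have hjj : j = j' := Fin.ext (by omega)
    rw [hjj]
  · -- a-leaf vs b-leaf
    exfalso
    have hm : q * (j'.val - 1) + q ≤ q * (b - 1) := by
      have h2 := Nat.mul_le_mul_left q (show (j'.val - 1) + 1 ≤ b - 1 by
        have := hjb' (by omega); omega)
      rwa [Nat.mul_add, Nat.mul_one] at h2
    omega
  · -- b-leaf vs a-leaf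
    exfalso
    have hm : q * (j.val - 1) + q ≤ q * (b - 1) := by
      have h2 := Nat.mul_le_mul_left q (show (j.val - 1) + 1 ≤ b - 1 by
        have := hjb (by omega); omega)
      rwa [Nat.mul_add, Nat.mul_one] at h2
    omega
  · -- b-leaf vs b-leaf
    have hd := aux_dm (d := q) (u := j.val - 1) (r := 2*q - i.val)
      (u' := j'.val - 1) (r' := 2*q - i'.val) (by omega) (by omega) (by omega)
    have hii : i = i' := Fin.ext (by omega)
    subst hii
    have hjj : j = j' := Fin.ext (by omega)
    rw [hjj]
private lemma gV_bounds (a b q : ℕ) (ha : 1 ≤ a) (hb : 1 ≤ b) (v : Vtx a b q) :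
    1 ≤ gV a b q v ∧ gV a b q v ≤ (q+1)*a + q*b := by
  obtain ⟨i, j⟩ := v
  have hil := i.isLt
  obtain ⟨hja, hjb⟩ := fin_facts (a := a) (b := b) j
  have fa : (q+1)*a = (q+1)*(a-1) + (q+1) := by
    obtain ⟨a', rfl⟩ : ∃ a', a = a' + 1 := ⟨a - 1, by omega⟩
    rw [Nat.succ_sub_one, Nat.mul_add, Nat.mul_one]
  have fb : q*b = q*(b-1) + q := by
    obtain ⟨b', rfl⟩ : ∃ b', b = b' + 1 := ⟨b - 1, by omega⟩
    rw [Nat.succ_sub_one, Nat.mul_add, Nat.mul_one]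
  by_cases h0 : j.val = 0 <;> by_cases hi : i.val ≤ q <;>
    simp only [gV, h0, hi, if_true, if_false, ite_true, ite_false]
  · omega
  · omega
  · -- a-leaf
    have hm : (q+1) * (j.val - 1) + (q+1) ≤ (q+1) * (a-1) := by
      have h2 := Nat.mul_le_mul_left (q+1) (show (j.val - 1) + 1 ≤ a - 1 by
        have := hja hi; omega)
      rwa [Nat.mul_add, Nat.mul_one] at h2
    omega
  · -- b-leaf
    have hm : q * (j.val - 1) + q ≤ q * (b-1) := by
      have h2 := Nat.mul_le_mul_left q (show (j.val - 1) + 1 ≤ b - 1 by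
        have := hjb (by omega); omega)
      rwa [Nat.mul_add, Nat.mul_one] at h2
    omega

private lemma sumVal_bounds (a b q iv jv : ℕ) (hiv : iv < 2*q+1) (hjv : 1 ≤ jv)
    (hja : iv ≤ q → jv ≤ a - 1) (hjb : q + 1 ≤ iv → jv ≤ b - 1) :
    3*q+3 ≤ sumVal b q iv jv ∧
      sumVal b q iv jv ≤ 3*q+2 + ((q+1)*(a-1) + q*(b-1)) := by
  by_cases hi : iv ≤ q <;> simp only [sumVal, hi, if_true, if_false, ite_true, ite_false]
  · have hm : (q+1) * (jv - 1) + (q+1) ≤ (q+1) * (a-1) := by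
      have h2 := Nat.mul_le_mul_left (q+1) (show (jv - 1) + 1 ≤ a - 1 by
        have := hja hi; omega)
      rwa [Nat.mul_add, Nat.mul_one] at h2
    omega
  · have hm : q * (jv - 1) + q ≤ q * (b-1) := by
      have h2 := Nat.mul_le_mul_left q (show (jv - 1) + 1 ≤ b - 1 by
        have := hjb (by omega); omega)
      rwa [Nat.mul_add, Nat.mul_one] at h2
    omega

private lemma sumVal_inj {b q iv jv iv' jv' : ℕ}
    (hiv : iv < 2*q+1) (hiv' : iv' < 2*q+1) (hjv : 1 ≤ jv) (hjv' : 1 ≤ jv')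
    (hjb : q + 1 ≤ iv → jv ≤ b - 1) (hjb' : q + 1 ≤ iv' → jv' ≤ b - 1)
    (h : sumVal b q iv jv = sumVal b q iv' jv') : iv = iv' ∧ jv = jv' := by
  by_cases h1 : iv ≤ q <;> by_cases h2 : iv' ≤ q <;>
    simp only [sumVal, h1, h2, if_true, if_false, ite_true, ite_false] at h
  · have hd := aux_dm (d := q+1) (u := jv - 1) (r := iv)
      (u' := jv' - 1) (r' := iv') (by omega) (by omega) (by omega)
    omega
  · exfalso
    have hm : q * (jv' - 1) + q ≤ q * (b - 1) := by
      have h3 := Nat.mul_le_mul_left q (show (jv' - 1) + 1 ≤ b - 1 by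
        have := hjb' (by omega); omega)
      rwa [Nat.mul_add, Nat.mul_one] at h3
    omega
  · exfalso
    have hm : q * (jv - 1) + q ≤ q * (b - 1) := by
      have h3 := Nat.mul_le_mul_left q (show (jv - 1) + 1 ≤ b - 1 by
        have := hjb (by omega); omega)
      rwa [Nat.mul_add, Nat.mul_one] at h3
    omega
  · have hd := aux_dm (d := q) (u := jv - 1) (r := iv - (q+1))
      (u' := jv' - 1) (r' := iv' - (q+1)) (by omega) (by omega) (by omega)
    omega
private def sumS (a b q : ℕ) : Sym2 (Vtx a b q) → ℕ :=
  Sym2.lift ⟨fun u v => gV a b q u + gV a b q v, fun u v => by dsimp; omega⟩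

private lemma edge_rep {a b q : ℕ} {u v : Vtx a b q}
    (h : (constellationGraph (2*q+1) (fun i : Fin (2*q+1) =>
      if i.val ≤ q then a - 1 else b - 1)).Adj u v) :
    ∃ (i : Fin (2*q+1)) (j : Fin ((fun i : Fin (2*q+1) =>
        if i.val ≤ q then a - 1 else b - 1) i + 1)), 1 ≤ j.val ∧
      s(u, v) = s((⟨i, ⟨0, Nat.succ_pos _⟩⟩ : Vtx a b q), ⟨i, j⟩) ∧
      gV a b q u + gV a b q v = sumVal b q i.val j.val := by
  obtain ⟨h1, h2⟩ := h
  obtain ⟨i, x⟩ := u; obtain ⟨i', y⟩ := v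
  dsimp at h1; subst h1
  have hil := i.isLt
  rcases h2 with ⟨hx, hy⟩ | ⟨hx, hy⟩ <;> dsimp only at hx hy
  · refine ⟨i, y, by omega, ?_, ?_⟩
    · have hx0 : x = ⟨0, Nat.succ_pos _⟩ := Fin.ext hx
      rw [hx0]
    · have e1 : gV a b q ⟨i, x⟩ =
          (if i.val ≤ q then 2 * i.val + 1 else 2 * (i.val - q)) := by
        simp [gV, hx]
      have e2 : gV a b q ⟨i, y⟩ =
          (if i.val ≤ q then 2*q+2 + q*(b-1) + (q+1)*(y.val-1) + (q - i.val)
            else 2*q+2 + q*(y.val-1) + (2*q - i.val)) := by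
        simp [gV, hy]
      rw [e1, e2, sumVal]
      by_cases hi : i.val ≤ q
      · simp only [hi, if_true, ite_true]; omega
      · simp only [hi, if_false, ite_false]; omega
  · refine ⟨i, x, by omega, ?_, ?_⟩
    · have hy0 : y = ⟨0, Nat.succ_pos _⟩ := Fin.ext hy
      rw [hy0, Sym2.eq_swap]
    · have e1 : gV a b q ⟨i, y⟩ =
          (if i.val ≤ q then 2 * i.val + 1 else 2 * (i.val - q)) := by
        simp [gV, hy]
      have e2 : gV a b q ⟨i, x⟩ =
          (if i.val ≤ q then 2*q+2 + q*(b-1) + (q+1)*(x.val-1) + (q - i.val)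
            else 2*q+2 + q*(x.val-1) + (2*q - i.val)) := by
        simp [gV, hx]
      rw [e1, e2, sumVal]
      by_cases hi : i.val ≤ q
      · simp only [hi, if_true, ite_true]; omega
      · simp only [hi, if_false, ite_false]; omega

private lemma edge_mem_rep {a b q : ℕ} {e : Sym2 (Vtx a b q)}
    (he : e ∈ (constellationGraph (2*q+1) (fun i : Fin (2*q+1) =>
      if i.val ≤ q then a - 1 else b - 1)).edgeSet) :
    ∃ (i : Fin (2*q+1)) (j : Fin ((fun i : Fin (2*q+1) =>
        if i.val ≤ q then a - 1 else b - 1) i + 1)), 1 ≤ j.val ∧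
      e = s((⟨i, ⟨0, Nat.succ_pos _⟩⟩ : Vtx a b q), ⟨i, j⟩) ∧
      sumS a b q e = sumVal b q i.val j.val := by
  induction e using Sym2.ind with
  | _ u v =>
    rw [SimpleGraph.mem_edgeSet] at he
    obtain ⟨i, j, hj, hrep, hsum⟩ := edge_rep he
    refine ⟨i, j, hj, hrep, ?_⟩
    simpa [sumS] using hsum
private lemma sum_range_ite (x y q : ℕ) :
    ∑ i ∈ Finset.range (2*q+1), (if i ≤ q then x else y) = (q+1)*x + q*y := by
  have hsplit := Finset.sum_Ico_consecutive (fun i => if i ≤ q then x else y)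
    (Nat.zero_le (q+1)) (show q+1 ≤ 2*q+1 by omega)
  rw [Finset.range_eq_Ico, ← hsplit]
  have h1 : (∑ i ∈ Finset.Ico 0 (q+1), if i ≤ q then x else y) = (q+1)*x := by
    rw [Finset.sum_congr rfl fun i hi => if_pos (by
      have := Finset.mem_Ico.mp hi; omega)]
    rw [Finset.sum_const, Nat.card_Ico, smul_eq_mul, Nat.sub_zero]
  have h2 : (∑ i ∈ Finset.Ico (q+1) (2*q+1), if i ≤ q then x else y) = q*y := by
    rw [Finset.sum_congr rfl fun i hi => if_neg (by
      have := Finset.mem_Ico.mp hi; omega)]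
    rw [Finset.sum_const, Nat.card_Ico, smul_eq_mul]
    have : 2*q+1 - (q+1) = q := by omega
    rw [this]
  rw [h1, h2]

private lemma card_V (a b q : ℕ) (ha : 1 ≤ a) (hb : 1 ≤ b) :
    Fintype.card (Vtx a b q) = (q+1)*a + q*b := by
  rw [Fintype.card_sigma]
  simp only [Fintype.card_fin]
  have hfn : ∀ i : Fin (2*q+1),
      ((fun i : Fin (2*q+1) => if i.val ≤ q then a - 1 else b - 1) i) + 1
        = (fun t : ℕ => if t ≤ q then a else b) i.val := by
    intro i
    by_cases hi : i.val ≤ q <;> simp [hi] <;> omega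
  rw [Finset.sum_congr rfl fun i _ => hfn i]
  rw [Fin.sum_univ_eq_sum_range (fun t => if t ≤ q then a else b) (2*q+1)]
  exact sum_range_ite a b q

private def leafEquiv (s : ℕ) : {j : Fin (s+1) // j.val ≠ 0} ≃ Fin s where
  toFun j := ⟨j.1.val - 1, by have h1 := j.1.isLt; have h2 := j.2; omega⟩
  invFun t := ⟨⟨t.val + 1, by have := t.isLt; omega⟩, by simp⟩
  left_inv j := by
    apply Subtype.ext; apply Fin.ext
    have h2 := j.2
    simp; omega
  right_inv t := by apply Fin.ext; simp

private def phi (a b q : ℕ)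
    (x : Σ i : Fin (2*q+1), {j : Fin ((fun i : Fin (2*q+1) =>
      if i.val ≤ q then a - 1 else b - 1) i + 1) // j.val ≠ 0}) :
    ↥(constellationGraph (2*q+1) (fun i : Fin (2*q+1) =>
      if i.val ≤ q then a - 1 else b - 1)).edgeSet :=
  ⟨s((⟨x.1, ⟨0, Nat.succ_pos _⟩⟩ : Vtx a b q), ⟨x.1, x.2.1⟩), by
    rw [SimpleGraph.mem_edgeSet]
    exact ⟨rfl, Or.inl ⟨rfl, x.2.2⟩⟩⟩

private lemma phi_bij (a b q : ℕ) : Function.Bijective (phi a b q) := by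
  constructor
  · rintro ⟨i, j, hj⟩ ⟨i', j', hj'⟩ h
    simp only [phi, Subtype.mk.injEq, Sym2.eq_iff] at h
    rcases h with ⟨h1, h2⟩ | ⟨h1, h2⟩
    · have hi : i = i' := congrArg Sigma.fst h2
      subst hi
      have hjj : j = j' := by
        have := (Sigma.mk.inj_iff.mp h2).2
        exact eq_of_heq this
      subst hjj; rfl
    · exfalso
      have hi : i = i' := congrArg Sigma.fst h1
      subst hi
      have hjj := (Sigma.mk.inj_iff.mp h1).2
      have : (⟨0, Nat.succ_pos _⟩ : Fin _) = j' := eq_of_heq hjj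
      exact hj' (congrArg Fin.val this).symm
  · rintro ⟨e, he⟩
    obtain ⟨i, j, hj, hrep, -⟩ := edge_mem_rep he
    refine ⟨⟨i, ⟨j, by omega⟩⟩, ?_⟩
    apply Subtype.ext
    exact hrep.symm

private lemma card_E (a b q : ℕ) :
    ((constellationGraph (2*q+1) (fun i : Fin (2*q+1) =>
      if i.val ≤ q then a - 1 else b - 1)).edgeSet).ncard
      = (q+1)*(a-1) + q*(b-1) := by
  rw [← Nat.card_coe_set_eq, ← Nat.card_congr (Equiv.ofBijective _ (phi_bij a b q))]
  rw [Nat.card_eq_fintype_card, Fintype.card_sigma]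
  have hfn : ∀ i : Fin (2*q+1),
      Fintype.card {j : Fin ((fun i : Fin (2*q+1) =>
        if i.val ≤ q then a - 1 else b - 1) i + 1) // j.val ≠ 0}
      = (fun t : ℕ => if t ≤ q then a - 1 else b - 1) i.val := by
    intro i
    rw [Fintype.card_congr (leafEquiv _), Fintype.card_fin]
  rw [Finset.sum_congr rfl fun i _ => hfn i]
  rw [Fin.sum_univ_eq_sum_range (fun t => if t ≤ q then a - 1 else b - 1) (2*q+1)]
  exact sum_range_ite (a-1) (b-1) q
theorem super_edge_magic_two_star_sizes (a b q : ℕ) (ha : 1 ≤ a) (hb : 1 ≤ b) :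
    SuperEdgeMagic (constellationGraph (2 * q + 1)
      (fun i => if i.val ≤ q then a - 1 else b - 1)) := by
  classical
  set G := constellationGraph (2 * q + 1)
    (fun i : Fin (2 * q + 1) => if i.val ≤ q then a - 1 else b - 1) with hG
  haveI : Fintype ↥G.edgeSet := (Set.toFinite _).fintype
  have hvinj := gV_inj a b q
  have hvb := gV_bounds a b q ha hb
  have hcV : Fintype.card (Vtx a b q) = (q+1)*a + q*b := card_V a b q ha hb
  have hcE : G.edgeSet.ncard = (q+1)*(a-1) + q*(b-1) := card_E a b q
  have hes : ∀ e : ↥G.edgeSet, 3*q+3 ≤ sumS a b q e.val ∧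
      sumS a b q e.val ≤ 3*q+2 + ((q+1)*(a-1) + q*(b-1)) := by
    intro e
    obtain ⟨i, j, hj, -, hsum⟩ := edge_mem_rep e.2
    obtain ⟨hja, hjb⟩ := fin_facts j
    rw [hsum]
    exact sumVal_bounds a b q i.val j.val i.isLt hj hja hjb
  have heinj : ∀ e e' : ↥G.edgeSet, sumS a b q e.val = sumS a b q e'.val → e = e' := by
    intro e e' h
    obtain ⟨i, j, hj, hrep, hsum⟩ := edge_mem_rep e.2
    obtain ⟨i', j', hj', hrep', hsum'⟩ := edge_mem_rep e'.2
    obtain ⟨hja, hjb⟩ := fin_facts j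
    obtain ⟨hja', hjb'⟩ := fin_facts j'
    rw [hsum, hsum'] at h
    obtain ⟨hi, hjv⟩ := sumVal_inj i.isLt i'.isLt hj hj' hjb hjb' h
    have hii : i = i' := Fin.ext hi
    subst hii
    have hjj : j = j' := Fin.ext hjv
    subst hjj
    apply Subtype.ext
    rw [hrep, hrep']
  have hfinj : Function.Injective (Sum.elim (gV a b q)
      (fun e : ↥G.edgeSet => (q+1)*a + q*b + ((q+1)*(a-1) + q*(b-1)) + (3*q+3)
        - sumS a b q e.val)) := by
    rintro (u | e) (u' | e') h <;> simp only [Sum.elim_inl, Sum.elim_inr] at h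
    · exact congrArg Sum.inl (hvinj h)
    · exfalso; have h1 := hvb u; have h2 := hes e'; omega
    · exfalso; have h1 := hvb u'; have h2 := hes e; omega
    · have h1 := hes e; have h2 := hes e'
      exact congrArg Sum.inr (heinj e e' (by omega))
  have hmem : ∀ x : Vtx a b q ⊕ ↥G.edgeSet, Sum.elim (gV a b q)
      (fun e : ↥G.edgeSet => (q+1)*a + q*b + ((q+1)*(a-1) + q*(b-1)) + (3*q+3)
        - sumS a b q e.val) x
      ∈ Set.Icc 1 ((q+1)*a + q*b + ((q+1)*(a-1) + q*(b-1))) := by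
    rintro (u | e)
    · have := hvb u; simp only [Sum.elim_inl, Set.mem_Icc]; omega
    · have := hes e; simp only [Sum.elim_inr, Set.mem_Icc]; omega
  have himage : (Sum.elim (gV a b q)
      (fun e : ↥G.edgeSet => (q+1)*a + q*b + ((q+1)*(a-1) + q*(b-1)) + (3*q+3)
        - sumS a b q e.val)) '' Set.univ
      = Set.Icc 1 ((q+1)*a + q*b + ((q+1)*(a-1) + q*(b-1))) := by
    apply Set.eq_of_subset_of_ncard_le ?_ ?_ (Set.finite_Icc _ _)
    · rintro y ⟨x, -, rfl⟩; exact hmem x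
    · rw [Set.ncard_image_of_injective _ hfinj, Set.ncard_univ, Nat.card_sum,
        Nat.card_coe_set_eq, hcE, Nat.card_eq_fintype_card, hcV,
        ← Finset.coe_Icc, Set.ncard_coe_finset, Nat.card_Icc]
      omega
  refine ⟨Sum.elim (gV a b q)
      (fun e : ↥G.edgeSet => (q+1)*a + q*b + ((q+1)*(a-1) + q*(b-1)) + (3*q+3)
        - sumS a b q e.val),
    ⟨⟨(q+1)*a + q*b + ((q+1)*(a-1) + q*(b-1)) + (3*q+3), ?_, ?_⟩, ?_⟩⟩
  · -- BijOn
    have hIcc : Fintype.card (Vtx a b q) + G.edgeSet.ncard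
        = (q+1)*a + q*b + ((q+1)*(a-1) + q*(b-1)) := by rw [hcV, hcE]
    rw [hIcc]
    exact ⟨fun x _ => hmem x, hfinj.injOn, himage.ge⟩
  · -- magic sums
    intro u v hadj
    obtain ⟨i, j, hj, hrep, hsum⟩ := edge_rep hadj
    obtain ⟨hja, hjb⟩ := fin_facts j
    have hbounds := sumVal_bounds a b q i.val j.val i.isLt hj hja hjb
    simp only [Sum.elim_inl, Sum.elim_inr, sumS, Sym2.lift_mk]
    omega
  · -- super (vertex range) condition
    have hrange : Set.range (gV a b q) = Set.Icc 1 ((q+1)*a + q*b) := by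
      apply Set.eq_of_subset_of_ncard_le ?_ ?_ (Set.finite_Icc _ _)
      · rintro y ⟨v, rfl⟩; exact Set.mem_Icc.mpr (hvb v)
      · rw [← Set.image_univ, Set.ncard_image_of_injective _ hvinj, Set.ncard_univ,
          Nat.card_eq_fintype_card, hcV, ← Finset.coe_Icc, Set.ncard_coe_finset,
          Nat.card_Icc]
        omega
    simp only [Sum.elim_inl]
    rw [hcV]
    exact hrange
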